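/- arXiv:1712.07755 — 2 statements merged into one kernel-verified Lean document; each statement's English description precedes it below -/
import Mathlib

section
/- Let d ≥ 1, let B be a hyperbolic invertible linear endomorphism of ℂ^d with |det B| = 1, let D be an invertible linear endomorphism of ℂ^d, and set C = D ∘ B ∘ D⁻¹. Then D maps the stable subspace of B onto the unstable subspace of C⁻¹, i.e., D(E^s(B)) = E^u(C⁻¹), and moreover D(E^s(B)) ⊔ E^u(C⁻¹) ≠ ℂ^d; in particular D(E^s(B)) and E^u(C⁻¹) do not span ℂ^d (transversality fails). -/
open Module Polynomial
open scoped NNReal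
set_option synthInstance.maxHeartbeats 1000000
set_option maxHeartbeats 1000000



/-- The stable subspace of a linear endomorphism of `ℂ^d`: the supremum of the maximal
generalized eigenspaces for eigenvalues of modulus `< 1`. -/
noncomputable def stableSubspace {d : ℕ} (T : Module.End ℂ (Fin d → ℂ)) :
    Submodule ℂ (Fin d → ℂ) :=
  ⨆ (μ : ℂ) (_ : ‖μ‖ < 1), T.maxGenEigenspace μ

/-- The unstable subspace of a linear endomorphism of `ℂ^d`: the supremum of the maximal
generalized eigenspaces for eigenvalues of modulus `> 1`. -/
noncomputable def unstableSubspace {d : ℕ} (T : Module.End ℂ (Fin d → ℂ)) :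
    Submodule ℂ (Fin d → ℂ) :=
  ⨆ (μ : ℂ) (_ : 1 < ‖μ‖), T.maxGenEigenspace μ

/-- A linear endomorphism is hyperbolic if it is invertible and has no eigenvalue of
modulus one. -/
def IsHyperbolic {d : ℕ} (T : Module.End ℂ (Fin d → ℂ)) : Prop :=
  IsUnit T ∧ ∀ μ : ℂ, T.HasEigenvalue μ → ‖μ‖ ≠ 1

section auxlemmas
variable {V : Type*} [AddCommGroup V] [Module ℂ V]

lemma conj_pow_apply (D : V ≃ₗ[ℂ] V) (h : Module.End ℂ V) (k : ℕ) (x : V) :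
    (((D.toLinearMap ∘ₗ h ∘ₗ D.symm.toLinearMap : Module.End ℂ V)) ^ k) x
      = D ((h ^ k) (D.symm x)) := by
  induction k with
  | zero => simp
  | succ k ih =>
      rw [pow_succ', pow_succ']
      simp [Module.End.mul_apply, ih]

lemma conj_sub_smul (D : V ≃ₗ[ℂ] V) (f : Module.End ℂ V) (μ : ℂ) :
    (D.toLinearMap ∘ₗ f ∘ₗ D.symm.toLinearMap : Module.End ℂ V) - μ • 1
      = D.toLinearMap ∘ₗ (f - μ • 1) ∘ₗ D.symm.toLinearMap := by
  ext x
  simp [map_sub, map_smul]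

lemma maxGen_conj (D : V ≃ₗ[ℂ] V) (f : Module.End ℂ V) (μ : ℂ) :
    Module.End.maxGenEigenspace
        (D.toLinearMap ∘ₗ f ∘ₗ D.symm.toLinearMap : Module.End ℂ V) μ
      = (f.maxGenEigenspace μ).map D.toLinearMap := by
  ext x
  rw [Module.End.mem_maxGenEigenspace, Submodule.mem_map_equiv,
    Module.End.mem_maxGenEigenspace]
  constructor
  · rintro ⟨k, hk⟩
    refine ⟨k, ?_⟩
    rw [conj_sub_smul, conj_pow_apply] at hk
    simpa using hk
  · rintro ⟨k, hk⟩
    refine ⟨k, ?_⟩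
    rw [conj_sub_smul, conj_pow_apply, hk, map_zero]

lemma maxGen_inv_le (f g : Module.End ℂ V) (hfg : f * g = 1) (hgf : g * f = 1)
    (μ : ℂ) (hμ : μ ≠ 0) :
    g.maxGenEigenspace μ ≤ f.maxGenEigenspace μ⁻¹ := by
  intro x hx
  rw [Module.End.mem_maxGenEigenspace] at hx ⊢
  obtain ⟨k, hk⟩ := hx
  have hcomm : Commute f (g - μ • 1) := by
    have h1 : Commute f g := by rw [Commute, SemiconjBy, hfg, hgf]
    exact h1.sub_right ((Commute.one_right f).smul_right μ)
  have key : f - μ⁻¹ • 1 = (-μ⁻¹) • (f * (g - μ • 1)) := by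
    rw [mul_sub, hfg, mul_smul_comm, mul_one]
    match_scalars <;> field_simp
  refine ⟨k, ?_⟩
  rw [key, _root_.smul_pow, hcomm.mul_pow]
  simp only [LinearMap.smul_apply, Module.End.mul_apply, hk, map_zero, smul_zero]

lemma maxGen_symm (B : V ≃ₗ[ℂ] V) (μ : ℂ) (hμ : μ ≠ 0) :
    Module.End.maxGenEigenspace B.symm.toLinearMap μ
      = Module.End.maxGenEigenspace B.toLinearMap μ⁻¹ := by
  have h1 : B.toLinearMap * B.symm.toLinearMap = 1 := by ext x; simp [Module.End.mul_apply]
  have h2 : B.symm.toLinearMap * B.toLinearMap = 1 := by ext x; simp [Module.End.mul_apply]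
  refine le_antisymm (maxGen_inv_le _ _ h1 h2 μ hμ) ?_
  have := maxGen_inv_le _ _ h2 h1 μ⁻¹ (inv_ne_zero hμ)
  rwa [inv_inv] at this

end auxlemmas

lemma multiset_nn_prod_le_one (s : Multiset ℂ) (h : ∀ μ ∈ s, ‖μ‖₊ < 1) :
    (s.map (fun μ => ‖μ‖₊)).prod ≤ 1 := by
  induction s using Multiset.induction with
  | empty => simp
  | cons a t ih =>
      rw [Multiset.map_cons, Multiset.prod_cons]
      exact mul_le_one' (le_of_lt (h a (Multiset.mem_cons_self a t)))
        (ih fun μ hμ => h μ (Multiset.mem_cons_of_mem hμ))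

lemma exists_big_eigenvalue (d : ℕ) (hd : 1 ≤ d) (f : Module.End ℂ (Fin d → ℂ))
    (hyp : ∀ μ : ℂ, f.HasEigenvalue μ → ‖μ‖ ≠ 1)
    (hdet : ‖LinearMap.det f‖ = 1) :
    ∃ μ : ℂ, 1 < ‖μ‖ ∧ f.HasEigenvalue μ := by
  set A := LinearMap.toMatrix' f with hA
  have hroot_eig : ∀ μ : ℂ, A.charpoly.IsRoot μ → f.HasEigenvalue μ := by
    intro μ h
    have h1 : (Polynomial.eval (Matrix.scalar (Fin d) μ) (X - C A)).det = 0 := by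
      rw [← Matrix.matPolyEquiv_charmatrix, ← _root_.eval_det]; exact h
    have h2 : (Matrix.scalar (Fin d) μ - A).det = 0 := by
      rwa [eval_sub, eval_X, eval_C] at h1
    have h3 : LinearMap.det (μ • (1 : Module.End ℂ (Fin d → ℂ)) - f) = 0 := by
      rw [← LinearMap.det_toMatrix' (μ • (1 : Module.End ℂ (Fin d → ℂ)) - f)]
      convert h2 using 2
      rw [map_sub, map_smul]
      congr 1
      ext i j
      simp [Matrix.scalar, LinearMap.toMatrix', Matrix.one_apply, Module.End.one_apply,
        Matrix.diagonal, Pi.single_apply, eq_comm]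
    have h4 := LinearMap.bot_lt_ker_of_det_eq_zero h3
    obtain ⟨x, hx, hx0⟩ := Submodule.exists_mem_ne_zero_of_ne_bot (ne_of_gt h4)
    apply Module.End.hasEigenvalue_of_hasEigenvector (x := x)
    refine ⟨Module.End.mem_eigenspace_iff.mpr ?_, hx0⟩
    have := LinearMap.mem_ker.mp hx
    simp only [LinearMap.sub_apply, LinearMap.smul_apply, Module.End.one_apply] at this
    linear_combination (norm := module) -this
  by_contra hcon
  push_neg at hcon
  have hsmall : ∀ μ ∈ A.charpoly.roots, ‖μ‖₊ < 1 := by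
    intro μ hμ
    have heig := hroot_eig μ (isRoot_of_mem_roots hμ)
    have h1 := hyp μ heig
    have h2 := hcon μ
    have h3 : ‖μ‖ < 1 := by
      rcases lt_trichotomy ‖μ‖ 1 with h | h | h
      · exact h
      · exact absurd h h1
      · exact absurd heig (h2 h)
    rwa [← coe_nnnorm, ← NNReal.coe_one, NNReal.coe_lt_coe] at h3
  have hcard : Multiset.card A.charpoly.roots = d := by
    have hs : A.charpoly.Splits := IsAlgClosed.splits _
    have := hs.natDegree_eq_card_roots
    rw [← this, Matrix.charpoly_natDegree_eq_dim, Fintype.card_fin]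
  have hne : A.charpoly.roots ≠ 0 := by
    intro h
    rw [h] at hcard
    simp at hcard
    omega
  obtain ⟨μ₁, hμ₁⟩ := Multiset.exists_mem_of_ne_zero hne
  obtain ⟨t, ht⟩ := Multiset.exists_cons_of_mem hμ₁
  have hprod : ‖A.det‖₊ = (A.charpoly.roots.map (fun μ => ‖μ‖₊)).prod := by
    rw [Matrix.det_eq_prod_roots_charpoly]
    exact map_multiset_prod (nnnormHom : ℂ →*₀ ℝ≥0) _
  have hlt : ‖A.det‖₊ < 1 := by
    rw [hprod, ht, Multiset.map_cons, Multiset.prod_cons]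
    calc ‖μ₁‖₊ * (t.map (fun μ => ‖μ‖₊)).prod ≤ ‖μ₁‖₊ * 1 := by
          gcongr
          exact multiset_nn_prod_le_one t fun μ hμ => hsmall μ (ht ▸ Multiset.mem_cons_of_mem hμ)
      _ < 1 := by rw [mul_one]; exact hsmall μ₁ hμ₁
  have hone : ‖A.det‖₊ = 1 := by
    have h5 : A.det = LinearMap.det f := LinearMap.det_toMatrix' f
    rw [h5]
    ext
    rw [coe_nnnorm, hdet, NNReal.coe_one]
  rw [hone] at hlt
  exact lt_irrefl _ hlt


/-- For hyperbolic `B` with `|det B| = 1` and `C = D B D⁻¹`, the image `D(E^s(B))` equals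
`E^u(C⁻¹)`, so the sought transversality `D(E^s(B)) ⊔ E^u(C⁻¹) = ℂ^d` fails. -/
theorem stmt5 (d : ℕ) (hd : 1 ≤ d) (B D : (Fin d → ℂ) ≃ₗ[ℂ] (Fin d → ℂ))
    (hB : IsHyperbolic B.toLinearMap) (hdet : ‖LinearMap.det B.toLinearMap‖ = 1) :
    (stableSubspace B.toLinearMap).map D.toLinearMap =
      unstableSubspace (D.symm.trans (B.trans D)).symm.toLinearMap ∧
    (stableSubspace B.toLinearMap).map D.toLinearMap ⊔
      unstableSubspace (D.symm.trans (B.trans D)).symm.toLinearMap ≠ ⊤ := by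
  have hEdef : (D.symm.trans (B.trans D)).symm.toLinearMap
      = D.toLinearMap ∘ₗ B.symm.toLinearMap ∘ₗ D.symm.toLinearMap := by
    ext x; simp
  have hterm : ∀ μ : ℂ, μ ≠ 0 →
      Module.End.maxGenEigenspace (D.symm.trans (B.trans D)).symm.toLinearMap μ
        = (Module.End.maxGenEigenspace B.toLinearMap μ⁻¹).map D.toLinearMap := by
    intro μ hμ
    rw [hEdef, maxGen_conj, maxGen_symm B μ hμ]
  have hzero : Module.End.maxGenEigenspace B.toLinearMap 0 = ⊥ := by
    rw [eq_bot_iff]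
    intro x hx
    rw [Module.End.mem_maxGenEigenspace] at hx
    obtain ⟨k, hk⟩ := hx
    simp only [zero_smul, sub_zero, Module.End.pow_apply] at hk
    have hinj : Function.Injective (B.toLinearMap^[k]) := Function.Injective.iterate B.injective k
    have : (B.toLinearMap)^[k] x = (B.toLinearMap)^[k] 0 := by
      simpa using hk
    simpa [Submodule.mem_bot] using hinj this
  have heq : (stableSubspace B.toLinearMap).map D.toLinearMap =
      unstableSubspace (D.symm.trans (B.trans D)).symm.toLinearMap := by
    simp only [stableSubspace, unstableSubspace, Submodule.map_iSup]
    apply le_antisymm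
    · refine iSup₂_le fun ν hν => ?_
      rcases eq_or_ne ν 0 with rfl | h0
      · rw [hzero, Submodule.map_bot]; exact bot_le
      · have hpos : 0 < ‖ν‖ := norm_pos_iff.mpr h0
        have h1 : 1 < ‖ν⁻¹‖ := by
          rw [norm_inv]
          exact (one_lt_inv₀ hpos).mpr hν
        have h2 : Module.End.maxGenEigenspace (D.symm.trans (B.trans D)).symm.toLinearMap ν⁻¹
            = (Module.End.maxGenEigenspace B.toLinearMap ν).map D.toLinearMap := by
          rw [hterm ν⁻¹ (inv_ne_zero h0), inv_inv]
        calc (Module.End.maxGenEigenspace B.toLinearMap ν).map D.toLinearMap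
            = Module.End.maxGenEigenspace (D.symm.trans (B.trans D)).symm.toLinearMap ν⁻¹ :=
              h2.symm
          _ ≤ _ := le_iSup₂_of_le ν⁻¹ h1 le_rfl
    · refine iSup₂_le fun μ hμ => ?_
      have hμ0 : μ ≠ 0 := by
        rintro rfl
        simp at hμ
        linarith
      rw [hterm μ hμ0]
      have h1 : ‖μ⁻¹‖ < 1 := by
        rw [norm_inv]
        exact inv_lt_one_of_one_lt₀ hμ
      exact le_iSup₂_of_le μ⁻¹ h1 le_rfl
  refine ⟨heq, ?_⟩
  intro htop
  rw [← heq, sup_idem] at htop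
  have hst : stableSubspace B.toLinearMap = ⊤ :=
    Submodule.map_injective_of_injective (f := D.toLinearMap) D.injective
      (by rw [htop, Submodule.map_top, LinearEquiv.range])
  obtain ⟨μ₀, hbig, heig⟩ := exists_big_eigenvalue d hd B.toLinearMap hB.2 hdet
  have hnebot : Module.End.maxGenEigenspace B.toLinearMap μ₀ ≠ ⊥ := by
    intro hb
    have hle : Module.End.eigenspace B.toLinearMap μ₀ ≤
        Module.End.maxGenEigenspace B.toLinearMap μ₀ :=
      (Module.End.genEigenspace B.toLinearMap μ₀).monotone le_top
    rw [Module.End.hasEigenvalue_iff] at heig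
    exact heig (le_bot_iff.mp (hb ▸ hle))
  have hdisj := (Module.End.independent_maxGenEigenspace B.toLinearMap) μ₀
  have hsub : Module.End.maxGenEigenspace B.toLinearMap μ₀ ≤
      ⨆ ν ≠ μ₀, Module.End.maxGenEigenspace B.toLinearMap ν := by
    calc Module.End.maxGenEigenspace B.toLinearMap μ₀ ≤ ⊤ := le_top
      _ = stableSubspace B.toLinearMap := hst.symm
      _ ≤ _ := by
          simp only [stableSubspace]
          refine iSup₂_le fun ν hν => le_iSup₂_of_le ν ?_ le_rfl
          rintro rfl
          linarith
  exact hnebot (hdisj.eq_bot_of_le hsub)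
end

section
/- Let c̄ > 0, T ≥ 0, and let σ, c : [0,T] → ℝ be continuous functions with σ(t) > 0 and 0 ≤ c(t) ≤ c̄ for all t ∈ [0,T]. Let w = (w₁, w₂) : [0,T] → ℝ² be differentiable and satisfy the linear system w₁′(t) = −σ(t)·w₁(t) − c(t)·w₂(t) and w₂′(t) = w₂(t) for all t ∈ [0,T]. If w₂(0) > 0 and |w₁(0)| ≤ c̄·w₂(0), then for every t ∈ [0,T] one has w₂(t) > 0 and |w₁(t)| ≤ c̄·w₂(t). -/
/-- If `F` has nonnegative derivative on `[0,T]` then `F 0 ≤ F t` on `[0,T]`. -/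
lemma mono_aux {T : ℝ} (hT : 0 ≤ T) {F F' : ℝ → ℝ}
    (hd : ∀ t ∈ Set.Icc 0 T, HasDerivWithinAt F (F' t) (Set.Icc 0 T) t)
    (h0 : ∀ t ∈ Set.Icc 0 T, 0 ≤ F' t) : ∀ t ∈ Set.Icc 0 T, F 0 ≤ F t := by
  have hc : ContinuousOn F (Set.Icc 0 T) := fun t ht => (hd t ht).continuousWithinAt
  have hmono : MonotoneOn F (Set.Icc 0 T) := by
    apply monotoneOn_of_hasDerivWithinAt_nonneg (convex_Icc 0 T) hc
    · intro x hx
      rw [interior_Icc] at hx ⊢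
      exact (hd x (Set.Ioo_subset_Icc_self hx)).mono Set.Ioo_subset_Icc_self
    · intro x hx
      rw [interior_Icc] at hx
      exact h0 x (Set.Ioo_subset_Icc_self hx)
  intro t ht
  exact hmono (Set.left_mem_Icc.2 hT) ht ht.1

/-- Invariance of the unstable cone `{(a,b) : |a| ≤ c̄·b, b > 0}` under the derivative
cocycle `w₁' = -σ w₁ - c w₂`, `w₂' = w₂` of the DA flow. -/
theorem stmt7 (cbar : ℝ) (hcbar : 0 < cbar) (T : ℝ) (hT : 0 ≤ T)
    (σ c : ℝ → ℝ)
    (hσcont : ContinuousOn σ (Set.Icc 0 T)) (hccont : ContinuousOn c (Set.Icc 0 T))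
    (hσ : ∀ t ∈ Set.Icc 0 T, 0 < σ t)
    (hc0 : ∀ t ∈ Set.Icc 0 T, 0 ≤ c t) (hc1 : ∀ t ∈ Set.Icc 0 T, c t ≤ cbar)
    (w₁ w₂ : ℝ → ℝ)
    (hw₁ : ∀ t ∈ Set.Icc 0 T,
      HasDerivWithinAt w₁ (-σ t * w₁ t - c t * w₂ t) (Set.Icc 0 T) t)
    (hw₂ : ∀ t ∈ Set.Icc 0 T, HasDerivWithinAt w₂ (w₂ t) (Set.Icc 0 T) t)
    (h0 : 0 < w₂ 0) (hcone : |w₁ 0| ≤ cbar * w₂ 0) :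
    ∀ t ∈ Set.Icc 0 T, 0 < w₂ t ∧ |w₁ t| ≤ cbar * w₂ t := by
  -- Step 1 : positivity of w₂, via the constant function w₂ t * exp (-t).
  have hW : ∀ t ∈ Set.Icc 0 T,
      HasDerivWithinAt (fun t => w₂ t * Real.exp (-t))
        (w₂ t * Real.exp (-t) + w₂ t * (Real.exp (-t) * -1)) (Set.Icc 0 T) t := by
    intro t ht
    have he : HasDerivAt (fun t : ℝ => Real.exp (-t)) (Real.exp (-t) * -1) t :=
      (Real.hasDerivAt_exp (-t)).comp t (hasDerivAt_neg t)
    exact (hw₂ t ht).mul he.hasDerivWithinAt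
  have hWzero : ∀ t ∈ Set.Icc 0 T,
      HasDerivWithinAt (fun t => w₂ t * Real.exp (-t)) 0 (Set.Icc 0 T) t := by
    intro t ht
    have := hW t ht
    have h : w₂ t * Real.exp (-t) + w₂ t * (Real.exp (-t) * -1) = 0 := by ring
    rwa [h] at this
  have hWconst : ∀ t ∈ Set.Icc 0 T, w₂ t * Real.exp (-t) = w₂ 0 * Real.exp (-(0:ℝ)) := by
    intro t ht
    have h1 := mono_aux hT hWzero (fun t _ => le_refl 0) t ht
    have h2 := mono_aux hT (F := fun t => -(w₂ t * Real.exp (-t))) (F' := fun _ => 0)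
      (fun t ht => ((hWzero t ht).neg).congr_deriv (by ring)) (fun t _ => le_refl 0) t ht
    linarith
  have hw₂pos : ∀ t ∈ Set.Icc 0 T, 0 < w₂ t := by
    intro t ht
    have h := hWconst t ht
    have he : (0:ℝ) < Real.exp (-t) := Real.exp_pos _
    have : 0 < w₂ t * Real.exp (-t) := by
      rw [h]; positivity
    have h0e : (0:ℝ) * Real.exp (-t) < w₂ t * Real.exp (-t) := by simpa using this
    exact lt_of_mul_lt_mul_right h0e he.le
  -- Step 2 : extend σ continuously to ℝ and integrate it.
  set σ' : ℝ → ℝ := Set.IccExtend hT ((Set.Icc 0 T).restrict σ) with hσ'def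
  have hσ'cont : Continuous σ' := Continuous.Icc_extend' (continuousOn_iff_continuous_restrict.mp hσcont)
  have hσ'eq : ∀ t ∈ Set.Icc 0 T, σ' t = σ t := by
    intro t ht
    simp [hσ'def, Set.IccExtend_of_mem hT _ ht, Set.restrict_apply]
    rfl
  set Φ : ℝ → ℝ := fun t => ∫ s in (0:ℝ)..t, σ' s with hΦdef
  have hΦderiv : ∀ t : ℝ, HasDerivAt Φ (σ' t) t := fun t =>
    (hσ'cont.integral_hasStrictDerivAt 0 t).hasDerivAt
  set E : ℝ → ℝ := fun t => Real.exp (Φ t) with hEdef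
  have hEderiv : ∀ t : ℝ, HasDerivAt E (Real.exp (Φ t) * σ' t) t := fun t => (hΦderiv t).exp
  have hEpos : ∀ t : ℝ, 0 < E t := fun t => Real.exp_pos _
  have hE0 : E 0 = 1 := by simp [hEdef, hΦdef]
  -- Step 3 : the two barrier functions.
  -- F t = (cbar * w₂ t - w₁ t) * E t,  G t = (cbar * w₂ t + w₁ t) * E t
  have key : ∀ (ε : ℝ), ε = 1 ∨ ε = -1 → ∀ t ∈ Set.Icc 0 T,
      0 ≤ cbar * w₂ t - ε * w₁ t := by
    intro ε hε
    set F : ℝ → ℝ := fun t => (cbar * w₂ t - ε * w₁ t) * E t with hFdef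
    set F' : ℝ → ℝ := fun t =>
      (cbar * w₂ t - ε * (-σ t * w₁ t - c t * w₂ t)) * E t
        + (cbar * w₂ t - ε * w₁ t) * (Real.exp (Φ t) * σ' t) with hF'def
    have hFderiv : ∀ t ∈ Set.Icc 0 T, HasDerivWithinAt F (F' t) (Set.Icc 0 T) t := by
      intro t ht
      exact (((hw₂ t ht).const_mul cbar).sub ((hw₁ t ht).const_mul ε)).mul
        (hEderiv t).hasDerivWithinAt
    have hF'nonneg : ∀ t ∈ Set.Icc 0 T, 0 ≤ F' t := by
      intro t ht
      have hσt := hσ t ht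
      have hct0 := hc0 t ht
      have hct1 := hc1 t ht
      have hw := hw₂pos t ht
      have hEt := hEpos t
      have hσeq := hσ'eq t ht
      have hexp : Real.exp (Φ t) = E t := rfl
      have hform : F' t = ((cbar + ε * c t + σ t * cbar) * w₂ t) * E t := by
        simp only [hF'def, hexp, hσeq]; ring
      rw [hform]
      have hcoef : 0 ≤ cbar + ε * c t + σ t * cbar := by
        rcases hε with h | h <;> subst h <;> nlinarith
      positivity
    have hF0 : 0 ≤ F 0 := by
      have := abs_le.mp hcone
      rcases hε with h | h <;> subst h <;>
        simp only [hFdef, hE0, mul_one] <;> linarith [this.1, this.2]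
    intro t ht
    have hFt : 0 ≤ F t := le_trans hF0 (mono_aux hT hFderiv hF'nonneg t ht)
    have hmul : (0:ℝ) * E t ≤ (cbar * w₂ t - ε * w₁ t) * E t := by simpa using hFt
    exact le_of_mul_le_mul_right hmul (hEpos t)
  intro t ht
  refine ⟨hw₂pos t ht, abs_le.mpr ⟨?_, ?_⟩⟩
  · have := key (-1) (Or.inr rfl) t ht; linarith
  · have := key 1 (Or.inl rfl) t ht; linarith
end
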